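/- Folding preserves the fundamental group: if Γ' is obtained from a labeled graph Γ by identifying two edges e, f with ι(e) = ι(f) and l(e) = l(f) (together with their terminal vertices and inverse edges), then π₁(Γ') = π₁(Γ) as subgroups of the free group F_X. -/

import Mathlib

/-! Framework: Serre graphs with labels in `X ∪ X⁻¹` (encoded as `X × Bool`),
labeled-graph morphisms, paths, `π₁` as a set of elements of the free group,
folded graphs, core graphs, folding/trimming steps, edge subdivision along a
homomorphism (the functor `F_φ`), Whitehead graphs and the category FGR. -/

/-- A graph in the sense of Serre together with an `X`-labeling. -/
structure LGraph (X : Type) : Type 1 where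
  V : Type
  E : Type
  init : E → V
  bar : E → E
  bar_ne : ∀ e, bar e ≠ e
  bar_bar : ∀ e, bar (bar e) = e
  lab : E → X × Bool
  lab_bar : ∀ e, lab (bar e) = ((lab e).1, !(lab e).2)

namespace LGraph

variable {X : Type}

/-- Terminal vertex of an edge. -/
def term (Γ : LGraph X) (e : Γ.E) : Γ.V := Γ.init (Γ.bar e)

/-- The label of an edge as an element of the free group. -/
def labF (Γ : LGraph X) (e : Γ.E) : FreeGroup X :=
  cond (Γ.lab e).2 (FreeGroup.of (Γ.lab e).1) ((FreeGroup.of (Γ.lab e).1)⁻¹)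

/-- `Γ.chain v p`: the list of edges `p` is a path starting at `v`. -/
def chain (Γ : LGraph X) : Γ.V → List Γ.E → Prop
  | _, [] => True
  | v, e :: p => Γ.init e = v ∧ chain Γ (Γ.term e) p

/-- Endpoint of a path starting at `v`. -/
def endOf (Γ : LGraph X) (v : Γ.V) (p : List Γ.E) : Γ.V :=
  p.foldl (fun _ e => Γ.term e) v

/-- Label of a path, as an element of the free group. -/
def pathLabel (Γ : LGraph X) (p : List Γ.E) : FreeGroup X :=
  (p.map Γ.labF).prod

/-- A path is reduced if it never immediately backtracks. -/
def Reduced (Γ : LGraph X) (p : List Γ.E) : Prop :=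
  p.Chain' (fun e f => f ≠ Γ.bar e)

/-- `π₁` of a graph at a base vertex: labels of closed paths at `v`. -/
def pi1 (Γ : LGraph X) (v : Γ.V) : Set (FreeGroup X) :=
  { g | ∃ p, Γ.chain v p ∧ Γ.endOf v p = v ∧ Γ.pathLabel p = g }

/-- A labeled graph is folded if distinct edges with a common initial vertex
have distinct labels. -/
def Folded (Γ : LGraph X) : Prop :=
  ∀ e f : Γ.E, Γ.init e = Γ.init f → Γ.lab e = Γ.lab f → e = f

/-- Connectivity. -/
def Connected (Γ : LGraph X) : Prop :=
  ∀ v w : Γ.V, ∃ p, Γ.chain v p ∧ Γ.endOf v p = w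

/-- An (unpointed) core graph: folded, connected, every edge lies on a
reduced circuit (reduced closed path which is also cyclically reduced). -/
def IsUCore (Γ : LGraph X) : Prop :=
  Γ.Folded ∧ Γ.Connected ∧
    ∀ e : Γ.E, ∃ v p, Γ.chain v p ∧ Γ.endOf v p = v ∧ Γ.Reduced p ∧
      (∀ e₁ eₙ, p.head? = some e₁ → p.getLast? = some eₙ → e₁ ≠ Γ.bar eₙ) ∧ e ∈ p

end LGraph

/-- Formal inverse of a letter in `X ∪ X⁻¹`. -/
def letterInv {X : Type} (a : X × Bool) : X × Bool := (a.1, !a.2)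

namespace LGraph

variable {X : Type}

/-- A 2-path: a pair of consecutive edges `(e, f)` with `f ≠ ē`. -/
def TwoPath (Γ : LGraph X) (e f : Γ.E) : Prop :=
  Γ.init f = Γ.term e ∧ f ≠ Γ.bar e

/-- The Whitehead graph of a labeled graph, as a set of unordered pairs of
letters: the pairs `{l(e), l(f̄)}` over 2-paths `(e, f)`. -/
def W (Γ : LGraph X) : Set (Sym2 (X × Bool)) :=
  { s | ∃ e f, Γ.TwoPath e f ∧ s = Sym2.mk (Γ.lab e) (letterInv (Γ.lab f)) }

end LGraph

/-- The full Whitehead graph on `X`: all non-diagonal unordered pairs. -/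
def FullW (X : Type) : Set (Sym2 (X × Bool)) := { s | ¬ s.IsDiag }

/-- Morphism of labeled graphs. -/
structure LHom {X : Type} (Γ Δ : LGraph X) where
  mapV : Γ.V → Δ.V
  mapE : Γ.E → Δ.E
  map_init : ∀ e, Δ.init (mapE e) = mapV (Γ.init e)
  map_bar : ∀ e, Δ.bar (mapE e) = mapE (Γ.bar e)
  map_lab : ∀ e, Δ.lab (mapE e) = Γ.lab e

/-- Pointed labeled graph. -/
structure PLGraph (X : Type) extends LGraph X where
  base : V

/-- Morphism of pointed labeled graphs. -/
structure PHom {X : Type} (Γ Δ : PLGraph X) extends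
    LHom Γ.toLGraph Δ.toLGraph where
  map_base : mapV Γ.base = Δ.base

namespace PLGraph

variable {X : Type}

/-- `π₁` of a pointed graph at its base point. -/
def pi1S (Γ : PLGraph X) : Set (FreeGroup X) := Γ.toLGraph.pi1 Γ.base

/-- A pointed core graph: folded, connected, and every edge lies on a reduced
closed path through the base point. -/
def IsCore (Γ : PLGraph X) : Prop :=
  Γ.toLGraph.Folded ∧ Γ.toLGraph.Connected ∧
    ∀ e : Γ.E, ∃ p, Γ.toLGraph.chain Γ.base p ∧
      Γ.toLGraph.endOf Γ.base p = Γ.base ∧ Γ.toLGraph.Reduced p ∧ e ∈ p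

end PLGraph

/-- `Δ` is obtained from `Γ` by one folding: identifying two distinct edges
`e₁, e₂` with the same initial vertex and the same label (and their inverses,
and their terminal vertices). -/
structure FoldStep {X : Type} (Γ Δ : LGraph X) where
  f : LHom Γ Δ
  e₁ : Γ.E
  e₂ : Γ.E
  ne : e₁ ≠ e₂
  init_eq : Γ.init e₁ = Γ.init e₂
  lab_eq : Γ.lab e₁ = Γ.lab e₂
  surjV : Function.Surjective f.mapV
  surjE : Function.Surjective f.mapE
  glueE : f.mapE e₁ = f.mapE e₂
  injE : ∀ d d', f.mapE d = f.mapE d' →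
    d = d' ∨ ({d, d'} : Set Γ.E) = {e₁, e₂} ∨
      ({d, d'} : Set Γ.E) = {Γ.bar e₁, Γ.bar e₂}
  injV : ∀ v w, f.mapV v = f.mapV w →
    v = w ∨ ({v, w} : Set Γ.V) = {Γ.term e₁, Γ.term e₂}

/-- `Δ` is obtained from `Γ` by one trimming: deleting a degree-one vertex
`v` together with its edge pair `{e, ē}`; `j` is the inclusion of `Δ` in `Γ`. -/
structure TrimStep {X : Type} (Γ Δ : LGraph X) where
  j : LHom Δ Γ
  v : Γ.V
  e : Γ.E
  init_e : Γ.init e = v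
  deg_one : ∀ d, Γ.init d = v → d = e
  injV : Function.Injective j.mapV
  injE : Function.Injective j.mapE
  rangeV : Set.range j.mapV = {w | w ≠ v}
  rangeE : Set.range j.mapE = {d | d ≠ e ∧ d ≠ Γ.bar e}

/-- Pointed folding step. -/
def PFold {X : Type} (Γ Δ : PLGraph X) : Prop :=
  ∃ F : FoldStep Γ.toLGraph Δ.toLGraph, F.f.mapV Γ.base = Δ.base

/-- Pointed trimming step (the trimmed vertex is not the base point). -/
def PTrim {X : Type} (Γ Δ : PLGraph X) : Prop :=
  ∃ T : TrimStep Γ.toLGraph Δ.toLGraph, T.v ≠ Γ.base ∧ T.j.mapV Δ.base = Γ.base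

/-- One folding or trimming step on pointed graphs. -/
def PStep {X : Type} (Γ Δ : PLGraph X) : Prop := PFold Γ Δ ∨ PTrim Γ Δ

/-- One folding or trimming step on unpointed graphs. -/
def UStep {X : Type} (Γ Δ : LGraph X) : Prop :=
  Nonempty (FoldStep Γ Δ) ∨ Nonempty (TrimStep Γ Δ)

/-- `Δ` is the subdivision of the `Y`-labeled graph `Γ` along
`φ : Y → FreeGroup X`: each edge `e` is replaced by a fresh path spelling the
reduced word of `φ` applied to the label of `e` (the functor `F_φ`). -/
structure Subdiv {Y X : Type} [DecidableEq X] (φ : Y → FreeGroup X)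
    (Γ : LGraph Y) (Δ : LGraph X) where
  vmap : Γ.V → Δ.V
  emap : Γ.E → List Δ.E
  vmap_inj : Function.Injective vmap
  emap_ne : ∀ e, emap e ≠ []
  emap_chain : ∀ e, Δ.chain (vmap (Γ.init e)) (emap e)
  emap_end : ∀ e, Δ.endOf (vmap (Γ.init e)) (emap e) = vmap (Γ.term e)
  emap_bar : ∀ e, emap (Γ.bar e) = ((emap e).reverse).map Δ.bar
  emap_spell : ∀ e, (emap e).map Δ.lab = (FreeGroup.lift φ (Γ.labF e)).toWord
  emap_nodup : ∀ e, (emap e).Nodup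
  emap_nobar : ∀ e d, d ∈ emap e → Δ.bar d ∉ emap e
  emap_disj : ∀ e e', e' ≠ e → e' ≠ Γ.bar e → ∀ d, d ∈ emap e → d ∉ emap e'
  cover_e : ∀ d : Δ.E, ∃ e, d ∈ emap e
  interior : ∀ w : Δ.V, w ∉ Set.range vmap →
    ∃ d₁ d₂ : Δ.E, d₁ ≠ d₂ ∧ Δ.init d₁ = w ∧ Δ.init d₂ = w ∧
      ∀ d, Δ.init d = w → d = d₁ ∨ d = d₂

/-- Whitehead pairs read along a word: `{wᵢ, wᵢ₊₁⁻¹}` over consecutive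
letters. -/
def wordW {X : Type} (l : List (X × Bool)) : Set (Sym2 (X × Bool)) :=
  { s | ∃ l₁ a b l₂, l = l₁ ++ a :: b :: l₂ ∧ s = Sym2.mk a (letterInv b) }

/-- The image of a letter under (the extension of) `φ`. -/
def letterIm {Y X : Type} (φ : Y → FreeGroup X) (a : Y × Bool) : FreeGroup X :=
  cond a.2 (φ a.1) (φ a.1)⁻¹

/-- A morphism in the category FGR of free groups with restrictions, from
`(Y, N)` to `(X, M)`: a non-degenerate homomorphism `F_Y → F_X` (given on the
basis `Y`) satisfying conditions (i)–(iv). -/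
structure FGRHom (Y X : Type) [DecidableEq X] (N : Set (Sym2 (Y × Bool)))
    (M : Set (Sym2 (X × Bool))) where
  φ : Y → FreeGroup X
  nondeg : ∀ y, φ y ≠ 1
  whitehead : ∀ y, wordW (φ y).toWord ⊆ M
  lastLetter : ∀ a b : Y × Bool, Sym2.mk a b ∈ N →
    ∃ ta tb, (letterIm φ a).toWord.getLast? = some ta ∧
      (letterIm φ b).toWord.getLast? = some tb ∧ ta ≠ tb ∧ Sym2.mk ta tb ∈ M

/-- No cancellation in the product of two (reduced) words. -/
def NoCancel {X : Type} [DecidableEq X] (p q : FreeGroup X) : Prop :=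
  (p * q).toWord = p.toWord ++ q.toWord

/-- A word is cyclically reduced: its last letter is not the inverse of its
first letter. -/
def CycRed {X : Type} [DecidableEq X] (w : FreeGroup X) : Prop :=
  ∀ a b, w.toWord.head? = some a → w.toWord.getLast? = some b → b ≠ (a.1, !a.2)


section Aux
variable {X : Type}

namespace LGraph

lemma endOf_cons (Γ : LGraph X) (v : Γ.V) (e : Γ.E) (p : List Γ.E) :
    Γ.endOf v (e :: p) = Γ.endOf (Γ.term e) p := rfl

lemma endOf_append (Γ : LGraph X) (v : Γ.V) (p q : List Γ.E) :
    Γ.endOf v (p ++ q) = Γ.endOf (Γ.endOf v p) q := by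
  simp [endOf, List.foldl_append]

lemma chain_append (Γ : LGraph X) : ∀ (p q : List Γ.E) (v : Γ.V),
    Γ.chain v (p ++ q) ↔ Γ.chain v p ∧ Γ.chain (Γ.endOf v p) q := by
  intro p
  induction p with
  | nil => intro q v; simp [chain, endOf]
  | cons e p ih =>
    intro q v
    simp [chain, ih, endOf_cons, and_assoc]

lemma pathLabel_nil (Γ : LGraph X) : Γ.pathLabel ([] : List Γ.E) = 1 := rfl

lemma pathLabel_cons (Γ : LGraph X) (e : Γ.E) (p : List Γ.E) :
    Γ.pathLabel (e :: p) = Γ.labF e * Γ.pathLabel p := by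
  simp [pathLabel]

lemma pathLabel_append (Γ : LGraph X) (p q : List Γ.E) :
    Γ.pathLabel (p ++ q) = Γ.pathLabel p * Γ.pathLabel q := by
  simp [pathLabel]

lemma labF_bar (Γ : LGraph X) (e : Γ.E) : Γ.labF (Γ.bar e) = (Γ.labF e)⁻¹ := by
  simp only [labF, lab_bar]
  cases h : (Γ.lab e).2 <;> simp

lemma term_bar (Γ : LGraph X) (e : Γ.E) : Γ.term (Γ.bar e) = Γ.init e := by
  simp [term, bar_bar]

end LGraph

namespace FoldStep

variable {Γ Δ : LGraph X} (F : FoldStep Γ Δ)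

lemma labF_map (e : Γ.E) : Δ.labF (F.f.mapE e) = Γ.labF e := by
  simp [LGraph.labF, F.f.map_lab]

lemma term_map (e : Γ.E) : Δ.term (F.f.mapE e) = F.f.mapV (Γ.term e) := by
  rw [LGraph.term, F.f.map_bar, F.f.map_init]; rfl

lemma chain_map : ∀ (p : List Γ.E) (v : Γ.V), Γ.chain v p →
    Δ.chain (F.f.mapV v) (p.map F.f.mapE) := by
  intro p
  induction p with
  | nil => intro v _; trivial
  | cons e p ih =>
    intro v h
    obtain ⟨h1, h2⟩ := h
    refine ⟨by rw [F.f.map_init, h1], ?_⟩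
    rw [F.term_map]
    exact ih _ h2

lemma endOf_map : ∀ (p : List Γ.E) (v : Γ.V),
    Δ.endOf (F.f.mapV v) (p.map F.f.mapE) = F.f.mapV (Γ.endOf v p) := by
  intro p
  induction p with
  | nil => intro v; rfl
  | cons e p ih =>
    intro v
    rw [List.map_cons, LGraph.endOf_cons, LGraph.endOf_cons, F.term_map, ih]

lemma pathLabel_map (p : List Γ.E) :
    Δ.pathLabel (p.map F.f.mapE) = Γ.pathLabel p := by
  induction p with
  | nil => rfl
  | cons e p ih =>
    rw [List.map_cons, LGraph.pathLabel_cons, LGraph.pathLabel_cons,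
      F.labF_map, ih]

/-- Any two vertices of `Γ` identified by the fold are connected by a path of
label `1`. -/
lemma connect (v v' : Γ.V) (h : F.f.mapV v = F.f.mapV v') :
    ∃ p, Γ.chain v p ∧ Γ.endOf v p = v' ∧ Γ.pathLabel p = 1 := by
  rcases F.injV v v' h with rfl | hset
  · exact ⟨[], trivial, rfl, rfl⟩
  · have hv : v ∈ ({Γ.term F.e₁, Γ.term F.e₂} : Set Γ.V) := by
      rw [← hset]; left; rfl
    have hv' : v' ∈ ({Γ.term F.e₁, Γ.term F.e₂} : Set Γ.V) := by
      rw [← hset]; right; rfl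
    have key : ∀ i j : Γ.E, Γ.init i = Γ.init j → Γ.lab i = Γ.lab j →
        ∃ p, Γ.chain (Γ.term i) p ∧ Γ.endOf (Γ.term i) p = Γ.term j ∧
          Γ.pathLabel p = 1 := by
      intro i j hinit hlab
      refine ⟨[Γ.bar i, j], ⟨rfl, ?_⟩, ?_, ?_⟩
      · exact ⟨by rw [Γ.term_bar, hinit], trivial⟩
      · rfl
      · rw [LGraph.pathLabel_cons, LGraph.pathLabel_cons, Γ.labF_bar,
          LGraph.pathLabel_nil, mul_one]
        have : Γ.labF i = Γ.labF j := by simp [LGraph.labF, hlab]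
        rw [this, inv_mul_cancel]
    rcases hv with hv | hv <;> rcases hv' with hv' | hv'
    · exact ⟨[], trivial, hv.trans hv'.symm, rfl⟩
    · subst hv hv'; exact key _ _ F.init_eq F.lab_eq
    · subst hv hv'; exact key _ _ F.init_eq.symm F.lab_eq.symm
    · exact ⟨[], trivial, hv.trans hv'.symm, rfl⟩

/-- Path lifting: any path in `Δ` between images of vertices lifts to a path
in `Γ` with the same label. -/
lemma lift : ∀ (q : List Δ.E) (v v' : Γ.V), Δ.chain (F.f.mapV v) q →
    Δ.endOf (F.f.mapV v) q = F.f.mapV v' →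
    ∃ p, Γ.chain v p ∧ Γ.endOf v p = v' ∧ Γ.pathLabel p = Δ.pathLabel q := by
  intro q
  induction q with
  | nil =>
    intro v v' _ hend
    obtain ⟨p, h1, h2, h3⟩ := F.connect v v' hend
    exact ⟨p, h1, h2, h3⟩
  | cons d q ih =>
    intro v v' hchain hend
    obtain ⟨hd, hq⟩ := hchain
    obtain ⟨e, rfl⟩ := F.surjE d
    have h0 : F.f.mapV v = F.f.mapV (Γ.init e) := by
      rw [← hd, F.f.map_init]
    obtain ⟨p₀, hc₀, he₀, hl₀⟩ := F.connect v (Γ.init e) h0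
    have hq' : Δ.chain (F.f.mapV (Γ.term e)) q := by
      rw [← F.term_map]; exact hq
    have hend' : Δ.endOf (F.f.mapV (Γ.term e)) q = F.f.mapV v' := by
      rw [LGraph.endOf_cons, F.term_map] at hend
      exact hend
    obtain ⟨p', hc', he', hl'⟩ := ih (Γ.term e) v' hq' hend'
    refine ⟨p₀ ++ e :: p', ?_, ?_, ?_⟩
    · rw [Γ.chain_append]
      exact ⟨hc₀, by rw [he₀]; exact ⟨rfl, hc'⟩⟩
    · rw [Γ.endOf_append, he₀, LGraph.endOf_cons, he']
    · rw [Γ.pathLabel_append, hl₀, one_mul, LGraph.pathLabel_cons,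
        LGraph.pathLabel_cons, hl', F.labF_map]

end FoldStep

end Aux

/-- Folding preserves the fundamental group: if `Δ` is obtained
from the pointed labeled graph `Γ` by identifying two edges with the same
initial vertex and the same label, then `π₁(Δ) = π₁(Γ)` inside `F_X`. -/
theorem stmt5 {X : Type} (Γ Δ : PLGraph X)
    (F : FoldStep Γ.toLGraph Δ.toLGraph) (hbase : F.f.mapV Γ.base = Δ.base) :
    Δ.pi1S = Γ.pi1S := by
  ext g
  constructor
  · rintro ⟨q, hc, he, hl⟩
    rw [← hbase] at hc he
    obtain ⟨p, hc', he', hl'⟩ := F.lift q Γ.base Γ.base hc he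
    exact ⟨p, hc', he', hl'.trans hl⟩
  · rintro ⟨p, hc, he, hl⟩
    refine ⟨p.map F.f.mapE, ?_, ?_, ?_⟩
    · rw [← hbase]; exact F.chain_map p Γ.base hc
    · rw [← hbase, F.endOf_map, he]
    · rw [F.pathLabel_map, hl]
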